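/- Under the same hypotheses (H = L + W on the complete graph, W_m = 0 the unique smallest eigenvalue, spectral ratio bounded by κ), the spectral gap satisfies γ ≥ h_{{m}}/κ³, where h_{{m}} = max{g_{{m}}, g_{𝒱∖{m}}} is the Cheeger ratio of the cut isolating m. Combined with the general upper bound, 2·h_{{m}} ≥ γ ≥ h_{{m}}/κ³. -/

import Mathlib

open Matrix
open scoped RealInnerProductSpace

/-- The `i`-th smallest eigenvalue (with multiplicity) of a Hermitian matrix. -/
noncomputable def sortedEig {n : ℕ} {A : Matrix (Fin n) (Fin n) ℝ}
    (hA : A.IsHermitian) (i : Fin n) : ℝ :=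
  hA.eigenvalues (Tuple.sort hA.eigenvalues i)

/-- The spectral gap: difference between the two lowest eigenvalues. -/
noncomputable def specGap {n : ℕ} (hn : 2 ≤ n) {A : Matrix (Fin n) (Fin n) ℝ}
    (hA : A.IsHermitian) : ℝ :=
  sortedEig hA ⟨1, by omega⟩ - sortedEig hA ⟨0, by omega⟩

/-- The combinatorial Laplacian of the complete graph on `V` vertices:
`L = V·I − J`, where `J` is the all-ones matrix. -/
def cgL (V : ℕ) : Matrix (Fin V) (Fin V) ℝ :=
  (V : ℝ) • (1 : Matrix (Fin V) (Fin V) ℝ) - Matrix.of (fun _ _ => (1 : ℝ))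

/-- The weighted Cheeger ratio `h_{{m}} = max{g_{{m}}, g_{𝒱∖{m}}}` of the cut isolating
the vertex `m`, with respect to the (positive) ground state `φ`. -/
noncomputable def cheegerRatio {V : ℕ} (φ : Fin V → ℝ) (m : Fin V) : ℝ :=
  max ((∑ v ∈ Finset.univ.erase m, φ v) / φ m)
    (φ m * (∑ v ∈ Finset.univ.erase m, φ v) / ∑ v ∈ Finset.univ.erase m, (φ v) ^ 2)

lemma cgL_mulVec {V : ℕ} (W : Fin V → ℝ) (ψ : Fin V → ℝ) (u : Fin V) :
    ((cgL V + Matrix.diagonal W) *ᵥ ψ) u = ((V : ℝ) + W u) * ψ u - ∑ v, ψ v := by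
  have : ((cgL V + Matrix.diagonal W) *ᵥ ψ) u
      = ∑ v, ((V : ℝ) * (if u = v then 1 else 0) - 1 + (if u = v then W u else 0)) * ψ v := by
    simp only [mulVec, dotProduct, cgL]
    refine Finset.sum_congr rfl fun v _ => ?_
    rcases eq_or_ne u v with h|h
    · subst h
      simp [Matrix.add_apply, Matrix.one_apply, diagonal_apply]
    · simp [Matrix.add_apply, Matrix.one_apply, diagonal_apply, h]
  rw [this]
  simp only [sub_mul, add_mul, Finset.sum_sub_distrib, Finset.sum_add_distrib, ite_mul, one_mul,
    zero_mul, mul_ite, mul_zero, Finset.sum_ite_eq, Finset.mem_univ, if_true]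
  ring

lemma euclid_dot {n : ℕ} (x y : EuclideanSpace ℝ (Fin n)) : ⟪x, y⟫ = (⇑x) ⬝ᵥ (⇑y) := by
  simp [PiLp.inner_apply, dotProduct, RCLike.inner_apply, mul_comm]

lemma dot_mulVec_symm {n : ℕ} {A : Matrix (Fin n) (Fin n) ℝ} (hA : A.IsHermitian)
    (v ψ : Fin n → ℝ) : v ⬝ᵥ (A *ᵥ ψ) = (A *ᵥ v) ⬝ᵥ ψ := by
  rw [dotProduct_mulVec, ← mulVec_transpose]
  have h : Aᵀ = A := by
    ext i j
    have := congrFun (congrFun hA.eq i) j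
    simpa [conjTranspose_apply] using this
  rw [h]

lemma rayleigh_second {n : ℕ} (hn : 2 ≤ n) {A : Matrix (Fin n) (Fin n) ℝ}
    (hA : A.IsHermitian) (φ : Fin n → ℝ)
    (hground : ∀ ψ : Fin n → ℝ, A *ᵥ ψ = sortedEig hA ⟨0, by omega⟩ • ψ → ∃ t : ℝ, ψ = t • φ)
    (ψ : Fin n → ℝ) (horth : φ ⬝ᵥ ψ = 0) :
    sortedEig hA ⟨1, by omega⟩ * (ψ ⬝ᵥ ψ) ≤ ψ ⬝ᵥ (A *ᵥ ψ) := by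
  classical
  set σ := Tuple.sort hA.eigenvalues with hσ
  set b := hA.eigenvectorBasis with hb
  set Ψ : EuclideanSpace ℝ (Fin n) := (WithLp.equiv 2 (Fin n → ℝ)).symm ψ with hΨ
  have hΨc : ⇑Ψ = ψ := rfl
  set c : Fin n → ℝ := fun i => ⟪b i, Ψ⟫ with hc
  have hbc : ∀ i, c i = (⇑(b i)) ⬝ᵥ ψ := by
    intro i
    show ⟪b i, Ψ⟫ = _
    rw [euclid_dot (b i) Ψ]
    rfl
  have hsum1 : ∑ i, c i * c i = ψ ⬝ᵥ ψ := by
    calc ∑ i, c i * c i = ∑ i, ⟪Ψ, b i⟫ * ⟪b i, Ψ⟫ :=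
          Finset.sum_congr rfl fun i _ => by rw [real_inner_comm (b i) Ψ]
      _ = ⟪Ψ, Ψ⟫ := b.sum_inner_mul_inner Ψ Ψ
      _ = ψ ⬝ᵥ ψ := by rw [euclid_dot Ψ Ψ]; rfl
  have hsum2 : ψ ⬝ᵥ (A *ᵥ ψ) = ∑ i, hA.eigenvalues i * (c i * c i) := by
    set Φ : EuclideanSpace ℝ (Fin n) := (WithLp.equiv 2 (Fin n → ℝ)).symm (A *ᵥ ψ) with hΦ
    have h := b.sum_inner_mul_inner Ψ Φ
    have hL : ⟪Ψ, Φ⟫ = ψ ⬝ᵥ (A *ᵥ ψ) := by rw [euclid_dot]; rfl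
    have hR : ∀ i, ⟪b i, Φ⟫ = hA.eigenvalues i * c i := by
      intro i
      rw [euclid_dot]
      show (⇑(b i)) ⬝ᵥ (A *ᵥ ψ) = _
      rw [dot_mulVec_symm hA, hA.mulVec_eigenvectorBasis, smul_dotProduct, hbc]
      rfl
    rw [← hL, ← h]
    refine Finset.sum_congr rfl fun i _ => ?_
    rw [hR i, real_inner_comm (b i) Ψ]
    show c i * (hA.eigenvalues i * c i) = _
    ring
  have hc0 : c (σ ⟨0, by omega⟩) = 0 := by
    obtain ⟨t, ht⟩ := hground (⇑(b (σ ⟨0, by omega⟩))) (by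
      rw [hA.mulVec_eigenvectorBasis]; rfl)
    rw [hbc, ht, smul_dotProduct, horth, smul_eq_mul, mul_zero]
  have hmono : ∀ i, i ≠ σ ⟨0, by omega⟩ → sortedEig hA ⟨1, by omega⟩ ≤ hA.eigenvalues i := by
    intro i hi
    have hk : σ.symm i ≠ ⟨0, by omega⟩ := by
      intro h
      exact hi (by rw [← h, Equiv.apply_symm_apply])
    have h1k : (⟨1, by omega⟩ : Fin n) ≤ σ.symm i := by
      have hv : (σ.symm i).val ≠ 0 := by
        intro h0
        exact hk (Fin.ext h0)
      rw [Fin.le_def]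
      simpa using Nat.one_le_iff_ne_zero.mpr hv
    have := Tuple.monotone_sort hA.eigenvalues h1k
    calc sortedEig hA ⟨1, by omega⟩ = hA.eigenvalues (σ ⟨1, by omega⟩) := rfl
      _ ≤ hA.eigenvalues (σ (σ.symm i)) := this
      _ = hA.eigenvalues i := by rw [Equiv.apply_symm_apply]
  rw [hsum2, ← hsum1, Finset.mul_sum]
  refine Finset.sum_le_sum fun i _ => ?_
  rcases eq_or_ne i (σ ⟨0, by omega⟩) with h | h
  · rw [h, hc0]; simp
  · exact mul_le_mul_of_nonneg_right (hmono i h) (mul_self_nonneg _)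

lemma exists_eig_pair {n : ℕ} (hn : 2 ≤ n) {A : Matrix (Fin n) (Fin n) ℝ}
    (hA : A.IsHermitian) :
    ∃ ψ₀ ψ₁ : Fin n → ℝ, ψ₀ ≠ 0 ∧ ψ₁ ≠ 0 ∧
      A *ᵥ ψ₀ = sortedEig hA ⟨0, by omega⟩ • ψ₀ ∧
      A *ᵥ ψ₁ = sortedEig hA ⟨1, by omega⟩ • ψ₁ ∧ ψ₀ ⬝ᵥ ψ₁ = 0 := by
  classical
  set σ := Tuple.sort hA.eigenvalues with hσ
  set b := hA.eigenvectorBasis with hb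
  have hne : ∀ i : Fin n, (⇑(b i) : Fin n → ℝ) ≠ 0 := by
    intro i h
    have h1 : ‖b i‖ = 1 := b.orthonormal.1 i
    have h0 : (b i : EuclideanSpace ℝ (Fin n)) = 0 := by
      ext u
      exact congrFun h u
    rw [h0] at h1
    simp at h1
  have hdot : (⇑(b (σ ⟨0, by omega⟩)) : Fin n → ℝ) ⬝ᵥ (⇑(b (σ ⟨1, by omega⟩))) = 0 := by
    have hne01 : σ ⟨0, by omega⟩ ≠ σ ⟨1, by omega⟩ := by
      intro h
      have := σ.injective h
      exact absurd (congrArg Fin.val this) (by simp)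
    have horm : ⟪b (σ ⟨0, by omega⟩), b (σ ⟨1, by omega⟩)⟫ = 0 := b.orthonormal.2 hne01
    rw [euclid_dot] at horm
    exact horm
  exact ⟨_, _, hne _, hne _, hA.mulVec_eigenvectorBasis _, hA.mulVec_eigenvectorBasis _, hdot⟩

/-- For `H = L + W` on the complete graph with `W m = 0` the unique
smallest eigenvalue of `W` and spectral ratio at most `κ`, the spectral gap satisfies
`2 h_{{m}} ≥ γ ≥ h_{{m}}/κ³`. -/
theorem cheeger_complete_graph {V : ℕ} (hV : 2 ≤ V) (W : Fin V → ℝ) (m : Fin V) (κ : ℝ)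
    (hWm : W m = 0) (hmin : ∀ u : Fin V, u ≠ m → 0 < W u)
    (hratio : ∀ u v : Fin V, u ≠ m → v ≠ m → W u ≤ κ * W v)
    (hH : (cgL V + Matrix.diagonal W).IsHermitian)
    (φ₀ : Fin V → ℝ) (hpos : ∀ u, 0 < φ₀ u)
    (hEig : (cgL V + Matrix.diagonal W).mulVec φ₀ = sortedEig hH ⟨0, by omega⟩ • φ₀) :
    specGap hV hH ≤ 2 * cheegerRatio φ₀ m ∧
      cheegerRatio φ₀ m / κ ^ 3 ≤ specGap hV hH := by
  classical
  haveI : Nonempty (Fin V) := ⟨m⟩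
  have hV2 : (2:ℝ) ≤ (V:ℝ) := by exact_mod_cast hV
  set H := cgL V + Matrix.diagonal W with hHdef
  set lam0 : ℝ := sortedEig hH ⟨0, by omega⟩ with hlam0
  set lam1 : ℝ := sortedEig hH ⟨1, by omega⟩ with hlam1
  have hgapdef : specGap hV hH = lam1 - lam0 := rfl
  -- eigen-equation expansion
  have hE : ∀ (μ : ℝ) (ψ : Fin V → ℝ), H *ᵥ ψ = μ • ψ →
      ∀ u, ψ u * ((V:ℝ) + W u - μ) = ∑ v, ψ v := by
    intro μ ψ h u
    have h1 := congrFun h u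
    rw [cgL_mulVec W ψ u] at h1
    have h2 : (μ • ψ) u = μ * ψ u := rfl
    rw [h2] at h1
    linear_combination h1
  set S : ℝ := ∑ u, φ₀ u with hSdef
  have hS : 0 < S := Finset.sum_pos (fun u _ => hpos u) Finset.univ_nonempty
  have hE0 : ∀ u, φ₀ u * ((V:ℝ) + W u - lam0) = S := hE lam0 φ₀ hEig
  set x : ℝ := (V:ℝ) - lam0 with hxdef
  have hE0' : ∀ u, φ₀ u * (x + W u) = S := by
    intro u
    have := hE0 u
    rw [hxdef]
    linear_combination this
  have hm : φ₀ m * x = S := by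
    have := hE0' m
    rwa [hWm, add_zero] at this
  have hxpos : 0 < x := by
    by_contra hc
    push_neg at hc
    have h2 : φ₀ m * x ≤ 0 := mul_nonpos_of_nonneg_of_nonpos (hpos m).le hc
    linarith [hm, hS]
  set F := Finset.univ.erase m with hFdef
  have hmF : m ∉ F := Finset.notMem_erase m _
  have hcardF : ((F.card : ℝ)) = (V:ℝ) - 1 := by
    rw [hFdef, Finset.card_erase_of_mem (Finset.mem_univ m), Finset.card_univ, Fintype.card_fin,
      Nat.cast_sub (by omega)]
    simp
  have hFne : F.Nonempty := by
    rw [← Finset.card_pos]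
    have : (0:ℝ) < (F.card : ℝ) := by rw [hcardF]; linarith
    exact_mod_cast this
  set A : ℝ := ∑ v ∈ F, φ₀ v with hAdef
  set B : ℝ := ∑ v ∈ F, (φ₀ v)^2 with hBdef
  have hApos : 0 < A := Finset.sum_pos (fun v _ => hpos v) hFne
  have hBpos : 0 < B := Finset.sum_pos (fun v _ => pow_pos (hpos v) 2) hFne
  have hSA : φ₀ m + A = S := by
    rw [hAdef, hSdef, hFdef]
    exact Finset.add_sum_erase _ _ (Finset.mem_univ m)
  have hAx : A = φ₀ m * (x - 1) := by linear_combination hSA - hm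
  have hx1 : 1 < x := by
    by_contra hc
    push_neg at hc
    have h2 : φ₀ m * (x - 1) ≤ 0 := mul_nonpos_of_nonneg_of_nonpos (hpos m).le (by linarith)
    linarith [hApos, hAx]
  -- minimal weight
  obtain ⟨v₀, hv₀F, hv₀min⟩ := F.exists_min_image W hFne
  set w : ℝ := W v₀ with hwdef
  have hv₀m : v₀ ≠ m := (Finset.mem_erase.mp hv₀F).1
  have hwpos : 0 < w := hmin v₀ hv₀m
  have hκ : 1 ≤ κ := by
    have h := hratio v₀ v₀ hv₀m hv₀m
    by_contra hc
    push_neg at hc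
    have h2 : κ*w < 1*w := mul_lt_mul_of_pos_right hc hwpos
    linarith
  have hκpos : 0 < κ := lt_of_lt_of_le one_pos hκ
  have hκ2 : 1 ≤ κ^2 := by
    calc (1:ℝ) = 1*1 := by ring
      _ ≤ κ*κ := mul_le_mul hκ hκ zero_le_one hκpos.le
      _ = κ^2 := by ring
  have hκ3 : 1 ≤ κ^3 := by
    calc (1:ℝ) = 1*1 := by ring
      _ ≤ κ^2*κ := mul_le_mul hκ2 hκ zero_le_one (by positivity)
      _ = κ^3 := by ring
  have hWlb : ∀ v ∈ F, w ≤ W v := fun v hv => hv₀min v hv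
  have hWub : ∀ v ∈ F, W v ≤ κ * w := fun v hv => hratio v v₀ ((Finset.mem_erase.mp hv).1) hv₀m
  have hW0 : ∀ u, 0 ≤ W u := by
    intro u
    rcases eq_or_ne u m with h | h
    · rw [h, hWm]
    · exact le_of_lt (hmin u h)
  -- bound on B
  have hφlb : ∀ v ∈ F, S ≤ φ₀ v * (x + κ*w) := by
    intro v hv
    have h1 := hE0' v
    have h2 : 0 ≤ φ₀ v * (κ*w - W v) := mul_nonneg (hpos v).le (by linarith [hWub v hv])
    have e : φ₀ v * (x + κ*w) - S = φ₀ v * (κ*w - W v) := by linear_combination h1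
    linarith
  have hBlb : φ₀ m * x * A ≤ B * (x + κ*w) := by
    have hterm : ∀ v ∈ F, φ₀ v * S ≤ (φ₀ v)^2 * (x + κ*w) := by
      intro v hv
      calc φ₀ v * S ≤ φ₀ v * (φ₀ v * (x + κ*w)) :=
            mul_le_mul_of_nonneg_left (hφlb v hv) (hpos v).le
        _ = (φ₀ v)^2 * (x + κ*w) := by ring
    calc φ₀ m * x * A = S * A := by rw [hm]
      _ = ∑ v ∈ F, φ₀ v * S := by
          rw [hAdef, Finset.mul_sum]
          exact Finset.sum_congr rfl fun v _ => mul_comm _ _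
      _ ≤ ∑ v ∈ F, (φ₀ v)^2 * (x + κ*w) := Finset.sum_le_sum hterm
      _ = B * (x + κ*w) := by rw [hBdef, Finset.sum_mul]
  -- the Cheeger ratio
  have hcheeg : cheegerRatio φ₀ m = max (A / φ₀ m) (φ₀ m * A / B) := rfl
  have hg1 : A / φ₀ m = x - 1 := by
    rw [hAx, mul_comm, mul_div_assoc, div_self (ne_of_gt (hpos m)), mul_one]
  -- ground state uniqueness
  have hground : ∀ ψ : Fin V → ℝ, H *ᵥ ψ = lam0 • ψ → ∃ t : ℝ, ψ = t • φ₀ := by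
    intro ψ hψ
    refine ⟨(∑ v, ψ v)/S, funext fun u => ?_⟩
    have h1 := hE lam0 ψ hψ u
    have h2 := hE0 u
    rw [Pi.smul_apply, smul_eq_mul]
    have hSne : S ≠ 0 := ne_of_gt hS
    rw [div_mul_eq_mul_div, eq_comm, div_eq_iff hSne]
    linear_combination (ψ u) * h2 - (φ₀ u) * h1
  have hground' : ∀ ψ : Fin V → ℝ, H *ᵥ ψ = sortedEig hH ⟨0, by omega⟩ • ψ → ∃ t : ℝ, ψ = t • φ₀ := by
    intro ψ hψ
    exact hground ψ hψ
  rw [hgapdef, hcheeg]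
  clear_value S x A B w lam0 lam1
  clear hgapdef hcheeg
  have hg2 : φ₀ m * A / B ≤ (x + κ*w)/x := by
    rw [div_le_div_iff₀ hBpos hxpos]
    calc φ₀ m * A * x = φ₀ m * x * A := by ring
      _ ≤ B * (x + κ*w) := hBlb
      _ = (x + κ*w) * B := by ring
  have hsplit : ∀ f : Fin V → ℝ, ∑ u, f u = f m + ∑ v ∈ F, f v :=
    fun f => (Finset.add_sum_erase _ f (Finset.mem_univ m)).symm
  have hlamx : lam0 = (V:ℝ) - x := by rw [hxdef]; ring
  constructor
  · -- upper bound
    set ψ : Fin V → ℝ := fun u => if u = m then B * φ₀ m else -(φ₀ m^2 * φ₀ u) with hψdef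
    have hψm : ψ m = B * φ₀ m := by rw [hψdef]; simp
    have hψv : ∀ v ∈ F, ψ v = -(φ₀ m^2 * φ₀ v) := by
      intro v hv
      rw [hψdef]
      simp [(Finset.mem_erase.mp hv).1]
    have horth : φ₀ ⬝ᵥ ψ = 0 := by
      show ∑ u, φ₀ u * ψ u = 0
      rw [hsplit (fun u => φ₀ u * ψ u), hψm]
      have h2 : ∑ v ∈ F, φ₀ v * ψ v = -(φ₀ m^2 * B) := by
        calc ∑ v ∈ F, φ₀ v * ψ v = ∑ v ∈ F, -(φ₀ m^2 * (φ₀ v)^2) :=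
              Finset.sum_congr rfl fun v hv => by rw [hψv v hv]; ring
          _ = -(φ₀ m^2 * B) := by rw [Finset.sum_neg_distrib, hBdef, Finset.mul_sum]
      rw [h2]
      ring
    have hsumψ : ∑ u, ψ u = B * φ₀ m - φ₀ m^2 * A := by
      rw [hsplit ψ, hψm]
      have h2 : ∑ v ∈ F, ψ v = -(φ₀ m^2 * A) := by
        calc ∑ v ∈ F, ψ v = ∑ v ∈ F, -(φ₀ m^2 * φ₀ v) :=
              Finset.sum_congr rfl fun v hv => hψv v hv
          _ = -(φ₀ m^2 * A) := by rw [Finset.sum_neg_distrib, hAdef, Finset.mul_sum]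
      rw [h2]
      ring
    have hNval : ψ ⬝ᵥ ψ = B^2 * φ₀ m^2 + φ₀ m^4 * B := by
      show ∑ u, ψ u * ψ u = _
      rw [hsplit (fun u => ψ u * ψ u), hψm]
      have h2 : ∑ v ∈ F, ψ v * ψ v = φ₀ m^4 * B := by
        calc ∑ v ∈ F, ψ v * ψ v = ∑ v ∈ F, φ₀ m^4 * (φ₀ v)^2 :=
              Finset.sum_congr rfl fun v hv => by rw [hψv v hv]; ring
          _ = φ₀ m^4 * B := by rw [hBdef, Finset.mul_sum]
      rw [h2]
      ring
    have hNpos : 0 < ψ ⬝ᵥ ψ := by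
      rw [hNval]
      have h1 : 0 < B^2 * φ₀ m^2 := mul_pos (pow_pos hBpos 2) (pow_pos (hpos m) 2)
      have h2 : 0 < φ₀ m^4 * B := mul_pos (pow_pos (hpos m) 4) hBpos
      linarith
    have hquad : ψ ⬝ᵥ (H *ᵥ ψ)
        = (V:ℝ)*(B*φ₀ m)^2 + φ₀ m^4*(lam0*B + S*A) - (B*φ₀ m - φ₀ m^2*A)^2 := by
      have hHv : ∀ u, (H *ᵥ ψ) u = ((V:ℝ) + W u) * ψ u - ∑ v, ψ v := by
        intro u
        rw [hHdef]
        exact cgL_mulVec W ψ u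
      show ∑ u, ψ u * (H *ᵥ ψ) u = _
      have e1 : ∑ u, ψ u * (H *ᵥ ψ) u
          = ∑ u, (((V:ℝ) + W u) * (ψ u)^2) - (∑ u, ψ u) * (∑ v, ψ v) := by
        rw [Finset.sum_mul, ← Finset.sum_sub_distrib]
        exact Finset.sum_congr rfl fun u _ => by rw [hHv u]; ring
      have e2 : ∑ u, (((V:ℝ) + W u) * (ψ u)^2)
          = ((V:ℝ))*(B*φ₀ m)^2 + φ₀ m^4*(lam0*B + S*A) := by
        rw [hsplit (fun u => ((V:ℝ) + W u) * (ψ u)^2), hψm, hWm]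
        have h3 : ∑ v ∈ F, ((V:ℝ) + W v) * (ψ v)^2
            = φ₀ m^4 * (lam0*B + S*A) := by
          calc ∑ v ∈ F, ((V:ℝ) + W v) * (ψ v)^2
              = ∑ v ∈ F, φ₀ m^4 * (lam0 * (φ₀ v)^2 + S * φ₀ v) := by
                refine Finset.sum_congr rfl fun v hv => ?_
                have h1 := hE0 v
                rw [hψv v hv]
                linear_combination (φ₀ m^4 * φ₀ v) * h1
            _ = φ₀ m^4 * ∑ v ∈ F, (lam0 * (φ₀ v)^2 + S * φ₀ v) := by
                rw [Finset.mul_sum]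
            _ = φ₀ m^4 * (lam0*B + S*A) := by
                rw [Finset.sum_add_distrib, ← Finset.mul_sum, ← Finset.mul_sum, ← hBdef, ← hAdef]
        rw [h3]
        ring
      rw [e1, e2, hsumψ]
      ring
    have hray := rayleigh_second hV hH φ₀ hground' ψ horth
    rw [← hlam1] at hray
    have hiden : ψ ⬝ᵥ (H *ᵥ ψ) = (lam0 + (x-1) + φ₀ m * A / B)*(ψ ⬝ᵥ ψ) := by
      rw [hquad, hNval, hAx, ← hm, hlamx]
      field_simp
      ring
    rw [hiden] at hray
    have hfin : lam1 ≤ lam0 + (x-1) + φ₀ m * A / B := (mul_le_mul_iff_of_pos_right hNpos).mp hray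
    have h1 : x - 1 ≤ max (A / φ₀ m) (φ₀ m * A / B) := by
      rw [← hg1]
      exact le_max_left _ _
    have h2 : φ₀ m * A / B ≤ max (A / φ₀ m) (φ₀ m * A / B) := le_max_right _ _
    linarith
  · -- lower bound
    obtain ⟨ψ0, ψ1, hψ0ne, hψ1ne, hψ0eig, hψ1eig, hψdot01⟩ := exists_eig_pair hV hH
    rw [← hlam0] at hψ0eig
    rw [← hlam1] at hψ1eig
    clear hlam0 hlam1
    have hφφ : 0 < φ₀ ⬝ᵥ φ₀ := by
      have h : φ₀ ⬝ᵥ φ₀ = ∑ u, φ₀ u * φ₀ u := rfl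
      rw [h]
      exact Finset.sum_pos (fun u _ => mul_pos (hpos u) (hpos u)) Finset.univ_nonempty
    have hlamne : lam1 ≠ lam0 := by
      intro heq
      obtain ⟨t0, ht0⟩ := hground ψ0 hψ0eig
      obtain ⟨t1, ht1⟩ := hground ψ1 (by rw [heq] at hψ1eig; exact hψ1eig)
      have ht0ne : t0 ≠ 0 := by
        rintro rfl
        rw [zero_smul] at ht0
        exact hψ0ne ht0
      have ht1ne : t1 ≠ 0 := by
        rintro rfl
        rw [zero_smul] at ht1
        exact hψ1ne ht1
      rw [ht0, ht1, smul_dotProduct, dotProduct_smul, smul_eq_mul, smul_eq_mul] at hψdot01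
      exact mul_ne_zero ht0ne (mul_ne_zero ht1ne (ne_of_gt hφφ)) hψdot01
    have hT := hE lam1 ψ1 hψ1eig
    set T := ∑ v, ψ1 v with hTdef
    have hgap : x + w ≤ lam1 - lam0 ∨
        (0 < lam1 - (V:ℝ) ∧ w ≤ κ^2 * x * (lam1 - (V:ℝ))) := by
      by_cases hTz : T = 0
      · -- pole case
        have hex : ∃ u, ψ1 u ≠ 0 := by
          by_contra h
          push_neg at h
          exact hψ1ne (funext fun u => h u)
        obtain ⟨u, hu⟩ := hex
        have hzero : (V:ℝ) + W u - lam1 = 0 := by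
          have h1 := hT u
          rw [hTz] at h1
          rcases mul_eq_zero.mp h1 with h | h
          · exact absurd h hu
          · exact h
        rcases eq_or_ne u m with hum | hum
        · exfalso
          have hlam1V : lam1 = (V:ℝ) := by
            rw [hum, hWm] at hzero
            linarith
          have hFzero : ∀ v ∈ F, ψ1 v = 0 := by
            intro v hv
            have h1 := hT v
            rw [hTz, hlam1V] at h1
            rcases mul_eq_zero.mp h1 with h | h
            · exact h
            · exact absurd (by linarith : W v = 0)
                (ne_of_gt (hmin v (Finset.mem_erase.mp hv).1))
          have hTm : T = ψ1 m := by
            rw [hTdef, hsplit ψ1, Finset.sum_eq_zero hFzero, add_zero]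
          rw [hum] at hu
          exact hu (by rw [← hTm]; exact hTz)
        · left
          have hWu : w ≤ W u := hWlb u (Finset.mem_erase.mpr ⟨hum, Finset.mem_univ u⟩)
          linarith [hzero, hWu]
      · -- secular case
        have hden : ∀ u, (V:ℝ) + W u - lam1 ≠ 0 := by
          intro u h
          have h1 := hT u
          rw [h, mul_zero] at h1
          exact hTz h1.symm
        have hxWpos : ∀ u, 0 < x + W u := by
          intro u
          rcases le_or_gt (x + W u) 0 with h | h
          · exfalso
            have h2 : φ₀ u * (x + W u) ≤ 0 := mul_nonpos_of_nonneg_of_nonpos (hpos u).le h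
            linarith [hE0' u, hS]
          · exact h
        have hsec0 : ∑ u, 1/(x + W u) = 1 := by
          have h1 : ∀ u ∈ Finset.univ, 1/(x + W u) = φ₀ u / S := by
            intro u _
            rw [div_eq_div_iff (ne_of_gt (hxWpos u)) (ne_of_gt hS)]
            linear_combination (-1) * hE0' u
          rw [Finset.sum_congr rfl h1, ← Finset.sum_div, ← hSdef, div_self (ne_of_gt hS)]
        have hsec1 : ∑ u, 1/((V:ℝ) + W u - lam1) = 1 := by
          have h1 : ∀ u ∈ Finset.univ, 1/((V:ℝ) + W u - lam1) = ψ1 u / T := by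
            intro u _
            have hD := hden u
            field_simp
            linear_combination (-1) * hT u
          rw [Finset.sum_congr rfl h1, ← Finset.sum_div, ← hTdef, div_self hTz]
        have hVlt : (V:ℝ) < lam1 := by
          by_contra hle
          push_neg at hle
          have hltV : lam1 < (V:ℝ) := by
            rcases lt_or_eq_of_le hle with h | h
            · exact h
            · exfalso
              apply hden m
              rw [hWm, h]
              ring
          have hpos1 : ∀ u, 0 < (V:ℝ) + W u - lam1 := fun u => by linarith [hW0 u]
          rcases lt_or_gt_of_ne hlamne with hlt | hgt
          · have hcon : (1:ℝ) < 1 := by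
              calc (1:ℝ) = ∑ u, 1/((V:ℝ) + W u - lam1) := hsec1.symm
                _ < ∑ u, 1/(x + W u) := by
                    refine Finset.sum_lt_sum_of_nonempty Finset.univ_nonempty fun u _ => ?_
                    apply one_div_lt_one_div_of_lt (hxWpos u)
                    linarith
                _ = 1 := hsec0
            exact absurd hcon (lt_irrefl 1)
          · have hcon : (1:ℝ) < 1 := by
              calc (1:ℝ) = ∑ u, 1/(x + W u) := hsec0.symm
                _ < ∑ u, 1/((V:ℝ) + W u - lam1) := by
                    refine Finset.sum_lt_sum_of_nonempty Finset.univ_nonempty fun u _ => ?_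
                    apply one_div_lt_one_div_of_lt (hpos1 u)
                    linarith
                _ = 1 := hsec1
            exact absurd hcon (lt_irrefl 1)
        set s := lam1 - (V:ℝ) with hsdef
        have hspos : 0 < s := by rw [hsdef]; linarith
        rcases le_or_gt w s with hws | hsw
        · left
          linarith
        · right
          refine ⟨hspos, ?_⟩
          have hId0 : 1/x + ∑ v ∈ F, 1/(x + W v) = 1 := by
            calc 1/x + ∑ v ∈ F, 1/(x + W v) = ∑ u, 1/(x + W u) := by
                  rw [hsplit (fun u => 1/(x + W u)), hWm, add_zero]
              _ = 1 := hsec0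
          have hId1 : 1/((V:ℝ) - lam1) + ∑ v ∈ F, 1/((V:ℝ) + W v - lam1) = 1 := by
            calc 1/((V:ℝ) - lam1) + ∑ v ∈ F, 1/((V:ℝ) + W v - lam1)
                = ∑ u, 1/((V:ℝ) + W u - lam1) := by
                  rw [hsplit (fun u => 1/((V:ℝ) + W u - lam1)), hWm, add_zero]
              _ = 1 := hsec1
          have hterm2 : ∀ v ∈ F, 1/((V:ℝ) + W v - lam1) - 1/(x + W v)
              ≤ (x + s) * (1/((w - s)*(x + w))) := by
            intro v hv
            have hWv := hWlb v hv
            have hd1 : 0 < W v - s := by linarith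
            have hd2 : 0 < x + W v := hxWpos v
            have hrw : (V:ℝ) + W v - lam1 = W v - s := by rw [hsdef]; ring
            rw [hrw]
            have heq : 1/(W v - s) - 1/(x + W v) = (x + s) * (1/((W v - s)*(x + W v))) := by
              field_simp
              ring
            rw [heq]
            have hle2 : (w - s)*(x + w) ≤ (W v - s)*(x + W v) :=
              mul_le_mul (by linarith) (by linarith) (by linarith) (le_of_lt hd1)
            have hpos2 : 0 < (w - s)*(x + w) := mul_pos (by linarith) (by linarith)
            exact mul_le_mul_of_nonneg_left
              (one_div_le_one_div_of_le hpos2 hle2) (by linarith : (0:ℝ) ≤ x + s)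
          have hsum2 : 1/x + 1/s ≤ ((V:ℝ) - 1) * ((x + s) * (1/((w - s)*(x + w)))) := by
            have hs1 : 1/((V:ℝ) - lam1) = -(1/s) := by
              rw [show (V:ℝ) - lam1 = -(s) by rw [hsdef]; ring, div_neg]
            have hcomb : 1/x + 1/s = ∑ v ∈ F, (1/((V:ℝ) + W v - lam1) - 1/(x + W v)) := by
              rw [Finset.sum_sub_distrib]
              have h2 := hId1
              rw [hs1] at h2
              linarith [hId0]
            rw [hcomb]
            calc ∑ v ∈ F, (1/((V:ℝ) + W v - lam1) - 1/(x + W v))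
                ≤ ∑ _v ∈ F, (x + s) * (1/((w - s)*(x + w))) := Finset.sum_le_sum hterm2
              _ = ((V:ℝ) - 1) * ((x + s) * (1/((w - s)*(x + w)))) := by
                  rw [Finset.sum_const, nsmul_eq_mul, hcardF]
          have hkey1 : (w - s)*(x + w) ≤ ((V:ℝ) - 1) * (x * s) := by
            have e1 : 1/x + 1/s = (x + s) * (1/(x*s)) := by
              field_simp
              ring
            rw [e1] at hsum2
            have hxs : 0 < x * s := mul_pos hxpos hspos
            have hws2 : 0 < (w - s)*(x + w) := mul_pos (by linarith) (by linarith)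
            have h3 : 1/(x*s) ≤ ((V:ℝ) - 1) * (1/((w - s)*(x + w))) := by
              have hxsp : (0:ℝ) < x + s := by linarith
              rw [show ((V:ℝ) - 1) * ((x + s) * (1/((w - s)*(x + w))))
                  = (x + s) * (((V:ℝ) - 1) * (1/((w - s)*(x + w)))) by ring] at hsum2
              exact (mul_le_mul_iff_of_pos_left hxsp).mp hsum2
            rw [mul_one_div] at h3
            rw [div_le_div_iff₀ hxs hws2] at h3
            linarith
          have hkey2 : ((V:ℝ) - 1) * x ≤ (x - 1)*(x + κ*w) := by
            have hsum3 : ((V:ℝ) - 1) * S ≤ A * (x + κ*w) := by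
              calc ((V:ℝ) - 1) * S = ∑ _v ∈ F, S := by
                    rw [Finset.sum_const, nsmul_eq_mul, hcardF]
                _ ≤ ∑ v ∈ F, φ₀ v * (x + κ*w) := Finset.sum_le_sum hφlb
                _ = A * (x + κ*w) := by rw [hAdef, Finset.sum_mul]
            rw [hAx, ← hm] at hsum3
            have h4 : φ₀ m * (((V:ℝ) - 1) * x) ≤ φ₀ m * ((x - 1)*(x + κ*w)) := by
              calc φ₀ m * (((V:ℝ) - 1) * x) = ((V:ℝ) - 1) * (φ₀ m * x) := by ring
                _ ≤ φ₀ m * (x - 1) * (x + κ*w) := hsum3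
                _ = φ₀ m * ((x - 1)*(x + κ*w)) := by ring
            exact (mul_le_mul_iff_of_pos_left (hpos m)).mp h4
          have h1 : (w - s)*(x + w) ≤ ((x - 1)*(x + κ*w))*s := by
            have h5 : ((V:ℝ) - 1) * (x*s) ≤ ((x - 1)*(x + κ*w))*s := by
              have h6 := mul_le_mul_of_nonneg_right hkey2 (le_of_lt hspos)
              calc ((V:ℝ) - 1) * (x*s) = (((V:ℝ) - 1) * x) * s := by ring
                _ ≤ ((x - 1)*(x + κ*w))*s := h6
            linarith [hkey1]
          have h2 : (x - 1)*(x + κ*w) + (x + w) ≤ κ^2*x*(x + w) := by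
            have e : κ^2*x*(x + w) - ((x - 1)*(x + κ*w) + (x + w))
                = (κ^2 - 1)*x^2 + κ*(κ - 1)*(x*w) + (κ - 1)*w := by ring
            have t1 : 0 ≤ (κ^2 - 1)*x^2 := mul_nonneg (by linarith [hκ2]) (sq_nonneg x)
            have t2 : 0 ≤ κ*(κ - 1)*(x*w) :=
              mul_nonneg (mul_nonneg hκpos.le (by linarith)) (mul_nonneg hxpos.le hwpos.le)
            have t3 : 0 ≤ (κ - 1)*w := mul_nonneg (by linarith) hwpos.le
            linarith
          have h3 : w * (x + w) ≤ (κ^2*x*s)*(x + w) := by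
            have h6 := mul_le_mul_of_nonneg_left h2 (le_of_lt hspos)
            calc w * (x + w) = (w - s)*(x + w) + s*(x + w) := by ring
              _ ≤ ((x - 1)*(x + κ*w))*s + s*(x + w) := by linarith [h1]
              _ = s*((x - 1)*(x + κ*w) + (x + w)) := by ring
              _ ≤ s*(κ^2*x*(x + w)) := h6
              _ = (κ^2*x*s)*(x + w) := by ring
          exact le_of_mul_le_mul_right h3 (by linarith : (0:ℝ) < x + w)
    -- final arithmetic
    have p1 : (1:ℝ) ≤ κ^3 * x := by
      calc (1:ℝ) ≤ κ^3 := hκ3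
        _ = κ^3 * 1 := by ring
        _ ≤ κ^3 * x := by
            apply mul_le_mul_of_nonneg_left (by linarith) (by positivity)
    have hgaple : x ≤ lam1 - lam0 := by
      rcases hgap with h | ⟨hs, hw2⟩
      · linarith
      · linarith
    have hgapnn : 0 ≤ lam1 - lam0 := by linarith
    rw [div_le_iff₀ (pow_pos hκpos 3)]
    apply max_le
    · rw [hg1]
      have e1 : lam1 - lam0 ≤ (lam1 - lam0)*κ^3 := le_mul_of_one_le_right hgapnn hκ3
      linarith
    · refine le_trans hg2 ?_
      rw [div_le_iff₀ hxpos]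
      have q1 : 0 ≤ x*(κ^3*x - 1) := mul_nonneg hxpos.le (by linarith [p1])
      rcases hgap with h | ⟨hs, hw2⟩
      · have main : x + κ*w ≤ κ^3*x*(x + w) := by
          have p2 : (1:ℝ) ≤ κ^2 * x := by
            calc (1:ℝ) ≤ κ^2 := hκ2
              _ = κ^2 * 1 := by ring
              _ ≤ κ^2 * x := by
                  apply mul_le_mul_of_nonneg_left (by linarith) (by positivity)
          have q2 : 0 ≤ (κ*w)*(κ^2*x - 1) :=
            mul_nonneg (mul_nonneg hκpos.le hwpos.le) (by linarith [p2])
          have e : κ^3*x*(x + w) - (x + κ*w) = x*(κ^3*x - 1) + (κ*w)*(κ^2*x - 1) := by ring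
          linarith
        calc x + κ*w ≤ κ^3*x*(x + w) := main
          _ = (x + w)*(κ^3*x) := by ring
          _ ≤ (lam1 - lam0)*(κ^3*x) :=
              mul_le_mul_of_nonneg_right h (mul_nonneg (pow_nonneg hκpos.le 3) hxpos.le)
          _ = (lam1 - lam0)*κ^3*x := by ring
      · have hgapeq : lam1 - lam0 = x + (lam1 - (V:ℝ)) := by linarith
        rw [hgapeq]
        have q2 : κ*w ≤ κ^3*x*(lam1 - (V:ℝ)) := by
          calc κ*w ≤ κ*(κ^2*x*(lam1 - (V:ℝ))) := mul_le_mul_of_nonneg_left hw2 hκpos.le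
            _ = κ^3*x*(lam1 - (V:ℝ)) := by ring
        have e : (x + (lam1 - (V:ℝ)))*κ^3*x - (x + κ*w)
            = x*(κ^3*x - 1) + (κ^3*x*(lam1 - (V:ℝ)) - κ*w) := by ring
        linarith
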